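/- Let P be a temporal-sampling of length t in a metric space (X,d) and fix r ≥ 0. The set function −W₂ is submodular: for all nonempty finite sets 𝒜 ⊆ ℬ of trajectories of P and every trajectory τ of P, W₂(𝒜) − W₂(𝒜 ∪ {τ}) ≥ W₂(ℬ) − W₂(ℬ ∪ {τ}). -/

import Mathlib

/-- `τ` is a trajectory of the temporal-sampling `P` of length `t`:
a choice of a point `τ i ∈ P i` in every level. -/
def IsTrajectory {X : Type*} [MetricSpace X] {t : ℕ} (P : Fin t → Finset X)
    (τ : Fin t → X) : Prop :=
  ∀ i, τ i ∈ P i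

/-- The displacement of the trajectory `τ` is at most `δ`, i.e.
`max_{1 ≤ i ≤ t-1} d(τ(i), τ(i+1)) ≤ δ` (vacuously true when `t = 1`, given `δ ≥ 0`). -/
def DispLE {X : Type*} [MetricSpace X] {t : ℕ} (τ : Fin t → X) (δ : ℝ) : Prop :=
  ∀ (i : ℕ) (h : i + 1 < t),
    dist (τ ⟨i, Nat.lt_of_succ_lt h⟩) (τ ⟨i + 1, h⟩) ≤ δ

/-- `𝒞` is a temporal `(k,r,δ)`-clustering of the temporal-sampling `P`:
a nonempty finite set of at most `k` trajectories of `P`, with `rad∞(𝒞) ≤ r`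
and `δ(𝒞) ≤ δ`. -/
def IsTemporalClustering {X : Type*} [MetricSpace X] {t : ℕ} (P : Fin t → Finset X)
    (𝒞 : Set (Fin t → X)) (k : ℕ) (r δ : ℝ) : Prop :=
  𝒞.Nonempty ∧ 𝒞.Finite ∧ 𝒞.ncard ≤ k ∧
  (∀ τ ∈ 𝒞, IsTrajectory P τ) ∧
  (∀ i : Fin t, ∀ p ∈ P i, ∃ τ ∈ 𝒞, dist p (τ i) ≤ r) ∧
  (∀ τ ∈ 𝒞, DispLE τ δ)

/-- `C` is an `s`-net of the finite set `S`: a subset of `S` whose points are pairwise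
at distance `> s` and such that every point of `S` is within distance `s` of `C`. -/
def IsNet {X : Type*} [MetricSpace X] (s : ℝ) (S C : Finset X) : Prop :=
  C ⊆ S ∧ (∀ x ∈ C, ∀ y ∈ C, x ≠ y → s < dist x y) ∧
  (∀ p ∈ S, ∃ c ∈ C, dist p c ≤ s)

/-- `cost₂(i;𝒞) = Σ_{p ∈ P i} min_{τ ∈ 𝒞} d(p, τ i)²`, the level-`i` means cost of the
set of trajectories `𝒞` (the infimum is the minimum for `𝒞` finite and nonempty). -/
noncomputable def levelCost2 {X : Type*} [MetricSpace X] {t : ℕ} (P : Fin t → Finset X)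
    (𝒞 : Set (Fin t → X)) (i : Fin t) : ℝ :=
  ∑ p ∈ P i, ⨅ τ : 𝒞, (dist p ((τ : Fin t → X) i)) ^ 2

/-- `𝒞` is a temporal `(k,r,δ)`-means-clustering of `P`: a nonempty finite set of at
most `k` trajectories of `P` with `rad₂(𝒞) ≤ r` and `δ(𝒞) ≤ δ`. -/
def IsTemporalMeansClustering {X : Type*} [MetricSpace X] {t : ℕ} (P : Fin t → Finset X)
    (𝒞 : Set (Fin t → X)) (k : ℕ) (r δ : ℝ) : Prop :=
  𝒞.Nonempty ∧ 𝒞.Finite ∧ 𝒞.ncard ≤ k ∧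
  (∀ τ ∈ 𝒞, IsTrajectory P τ) ∧
  (∀ i : Fin t, levelCost2 P 𝒞 i ≤ r) ∧
  (∀ τ ∈ 𝒞, DispLE τ δ)

/-- The potential `W₂(𝒞) = Σ_{i=1}^t max(0, cost₂(i;𝒞) − r)`. -/
noncomputable def Wpot2 {X : Type*} [MetricSpace X] {t : ℕ} (P : Fin t → Finset X)
    (r : ℝ) (𝒞 : Set (Fin t → X)) : ℝ :=
  ∑ i : Fin t, max 0 (levelCost2 P 𝒞 i - r)


lemma trunc_ineq (r a a' b b' : ℝ) (h1 : a' ≤ a) (h3 : b' ≤ a') (h4 : b - b' ≤ a - a')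
    (h5 : b' ≤ b) :
    max 0 (b - r) - max 0 (b' - r) ≤ max 0 (a - r) - max 0 (a' - r) := by
  rcases max_cases 0 (a - r) with ⟨ha, ha2⟩ | ⟨ha, ha2⟩ <;>
  rcases max_cases 0 (a' - r) with ⟨ha', ha2'⟩ | ⟨ha', ha2'⟩ <;>
  rcases max_cases 0 (b - r) with ⟨hb, hb2⟩ | ⟨hb, hb2⟩ <;>
  rcases max_cases 0 (b' - r) with ⟨hb', hb2'⟩ | ⟨hb', hb2'⟩ <;>
  linarith

/-- the set function `−W₂` is submodular: for nonempty finite sets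
`𝒜 ⊆ ℬ` of trajectories of `P` and any trajectory `τ` of `P`,
`W₂(𝒜) − W₂(𝒜 ∪ {τ}) ≥ W₂(ℬ) − W₂(ℬ ∪ {τ})`. -/
theorem statement12 {X : Type*} [MetricSpace X] {t : ℕ} (P : Fin t → Finset X)
    (hP : ∀ i, (P i).Nonempty) (r : ℝ) (hr : 0 ≤ r)
    (𝒜 ℬ : Set (Fin t → X)) (hAB : 𝒜 ⊆ ℬ)
    (hA : 𝒜.Nonempty) (hAfin : 𝒜.Finite) (hBfin : ℬ.Finite)
    (hBtraj : ∀ τ ∈ ℬ, IsTrajectory P τ)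
    (τ : Fin t → X) (hτ : IsTrajectory P τ) :
    Wpot2 P r ℬ - Wpot2 P r (ℬ ∪ {τ}) ≤ Wpot2 P r 𝒜 - Wpot2 P r (𝒜 ∪ {τ}) := by
  have hBne : ℬ.Nonempty := hA.mono hAB
  have key : ∀ i : Fin t,
      max 0 (levelCost2 P ℬ i - r) - max 0 (levelCost2 P (ℬ ∪ {τ}) i - r)
      ≤ max 0 (levelCost2 P 𝒜 i - r) - max 0 (levelCost2 P (𝒜 ∪ {τ}) i - r) := by
    intro i
    set f : X → (Fin t → X) → ℝ := fun p σ => dist p (σ i) ^ 2 with hf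
    have hbdd : ∀ (S : Set (Fin t → X)) (p : X), BddBelow (f p '' S) := by
      intro S p
      refine ⟨0, ?_⟩
      rintro x ⟨a, -, rfl⟩
      positivity
    have hlc : ∀ (S : Set (Fin t → X)), levelCost2 P S i = ∑ p ∈ P i, sInf (f p '' S) := by
      intro S
      unfold levelCost2
      refine Finset.sum_congr rfl fun p _ => ?_
      rw [Set.image_eq_range]
      rfl
    have hmono : ∀ (S T : Set (Fin t → X)) (p : X), S.Nonempty → S ⊆ T →
        sInf (f p '' T) ≤ sInf (f p '' S) := fun S T p hS hST =>
      csInf_le_csInf (hbdd T p) (hS.image _) (Set.image_mono hST)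
    have hunion : ∀ (S : Set (Fin t → X)) (p : X), S.Nonempty →
        sInf (f p '' (S ∪ {τ})) = min (sInf (f p '' S)) (f p τ) := by
      intro S p hS
      rw [Set.image_union, Set.image_singleton,
        csInf_union (hbdd S p) (hS.image _) bddBelow_singleton (Set.singleton_nonempty _),
        csInf_singleton]
    rw [hlc, hlc, hlc, hlc]
    refine trunc_ineq r _ _ _ _ ?_ ?_ ?_ ?_
    · exact Finset.sum_le_sum fun p _ => hmono _ _ p hA Set.subset_union_left
    · exact Finset.sum_le_sum fun p _ =>
        hmono _ _ p (hA.mono Set.subset_union_left) (Set.union_subset_union_left _ hAB)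
    · rw [← Finset.sum_sub_distrib, ← Finset.sum_sub_distrib]
      refine Finset.sum_le_sum fun p _ => ?_
      rw [hunion ℬ p hBne, hunion 𝒜 p hA]
      have hBA : sInf (f p '' ℬ) ≤ sInf (f p '' 𝒜) := hmono 𝒜 ℬ p hA hAB
      rcases min_cases (sInf (f p '' ℬ)) (f p τ) with ⟨h1, h2⟩ | ⟨h1, h2⟩ <;>
      rcases min_cases (sInf (f p '' 𝒜)) (f p τ) with ⟨h1', h2'⟩ | ⟨h1', h2'⟩ <;>
      linarith
    · exact Finset.sum_le_sum fun p _ => hmono _ _ p hBne Set.subset_union_left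
  unfold Wpot2
  rw [← Finset.sum_sub_distrib, ← Finset.sum_sub_distrib]
  exact Finset.sum_le_sum fun i _ => key i
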